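/- Let M_d = (1+d)M_b - d·J with M_b ∈ {0,1}^{m×n} having |E| ones, and suppose (v,w), v ∈ ℝᵐ₊, w ∈ ℝⁿ₊, both nonzero, satisfy the stationarity conditions v = max(0, M_d wᵀ/||w||₂²) and wᵀ = max(0, vᵀM_d/||v||₂²). Then ||v||₂ · ||w||₂ ≤ √|E|. -/

import Mathlib

/-- Any nontrivial stationary point (v,w) of the rank-one NF problem for
M_d satisfies ‖v‖₂·‖w‖₂ ≤ √|E|. -/
theorem stmt_4 (m n : ℕ) (Mb : Fin m → Fin n → ℝ)
    (hbin : ∀ i j, Mb i j = 0 ∨ Mb i j = 1)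
    (d : ℝ) (hd0 : 0 < d)
    (Md : Fin m → Fin n → ℝ) (hMd : ∀ i j, Md i j = (1 + d) * Mb i j - d)
    (v : Fin m → ℝ) (w : Fin n → ℝ)
    (hv : ∀ i, 0 ≤ v i) (hw : ∀ j, 0 ≤ w j) (hv0 : v ≠ 0) (hw0 : w ≠ 0)
    (hsv : ∀ i, v i = max 0 ((∑ j, Md i j * w j) / (∑ j, (w j) ^ 2)))
    (hsw : ∀ j, w j = max 0 ((∑ i, v i * Md i j) / (∑ i, (v i) ^ 2))) :
    Real.sqrt (∑ i, (v i) ^ 2) * Real.sqrt (∑ j, (w j) ^ 2)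
      ≤ Real.sqrt (∑ i, ∑ j, Mb i j) := by
  set A := ∑ i, (v i) ^ 2 with hA_def
  set B := ∑ j, (w j) ^ 2 with hB_def
  have hA : 0 < A := by
    obtain ⟨i, hi⟩ := Function.ne_iff.mp hv0
    exact Finset.sum_pos' (fun i _ => sq_nonneg _)
      ⟨i, Finset.mem_univ i, pow_pos ((hv i).lt_of_ne (Ne.symm hi)) 2⟩
  have hB : 0 < B := by
    obtain ⟨j, hj⟩ := Function.ne_iff.mp hw0
    exact Finset.sum_pos' (fun j _ => sq_nonneg _)
      ⟨j, Finset.mem_univ j, pow_pos ((hw j).lt_of_ne (Ne.symm hj)) 2⟩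
  -- key identity: vᵀ M_d w = A * B
  have key1 : ∑ i, v i * (∑ j, Md i j * w j) = A * B := by
    have h : ∀ i, v i * (∑ j, Md i j * w j) = v i ^ 2 * B := by
      intro i
      rcases max_choice 0 ((∑ j, Md i j * w j) / B) with h0 | h1
      · rw [hsv i, h0]; simp
      · have hvi : v i = (∑ j, Md i j * w j) / B := (hsv i).trans h1
        have : ∑ j, Md i j * w j = v i * B := by
          rw [hvi]; field_simp
        rw [this]; ring
    rw [Finset.sum_congr rfl (fun i _ => h i), ← Finset.sum_mul]
  -- M_d ≤ M_b entrywise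
  have hle : ∀ i j, Md i j ≤ Mb i j := by
    intro i j
    rcases hbin i j with h | h <;> rw [hMd i j, h] <;> nlinarith
  have key2 : A * B ≤ ∑ i, ∑ j, Mb i j * (v i * w j) := by
    rw [← key1]
    have : ∀ i, v i * (∑ j, Md i j * w j) = ∑ j, Md i j * (v i * w j) := by
      intro i; rw [Finset.mul_sum]; exact Finset.sum_congr rfl fun j _ => by ring
    rw [Finset.sum_congr rfl fun i _ => this i]
    refine Finset.sum_le_sum fun i _ => Finset.sum_le_sum fun j _ => ?_
    exact mul_le_mul_of_nonneg_right (hle i j) (mul_nonneg (hv i) (hw j))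
  -- Cauchy-Schwarz over pairs
  have cs : (∑ i, ∑ j, Mb i j * (v i * w j)) ^ 2 ≤
      (∑ i, ∑ j, (Mb i j) ^ 2) * (∑ i, ∑ j, (v i * w j) ^ 2) := by
    have := Finset.sum_mul_sq_le_sq_mul_sq (Finset.univ : Finset (Fin m × Fin n))
      (fun p => Mb p.1 p.2) (fun p => v p.1 * w p.2)
    simpa [Fintype.sum_prod_type] using this
  have hMb2 : ∑ i, ∑ j, (Mb i j) ^ 2 = ∑ i, ∑ j, Mb i j := by
    refine Finset.sum_congr rfl fun i _ => Finset.sum_congr rfl fun j _ => ?_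
    rcases hbin i j with h | h <;> rw [h] <;> ring
  have hvw2 : ∑ i, ∑ j, (v i * w j) ^ 2 = A * B := by
    rw [hA_def, hB_def, Finset.sum_mul_sum]
    exact Finset.sum_congr rfl fun i _ => Finset.sum_congr rfl fun j _ => by ring
  set E := ∑ i, ∑ j, Mb i j with hE_def
  have hE0 : 0 ≤ E := Finset.sum_nonneg fun i _ => Finset.sum_nonneg fun j _ => by
    rcases hbin i j with h | h <;> rw [h] <;> norm_num
  have hABE : A * B ≤ E := by
    have h1 : (A * B) ^ 2 ≤ (∑ i, ∑ j, Mb i j * (v i * w j)) ^ 2 := by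
      apply pow_le_pow_left₀ (by positivity) key2 2
    have h2 : (A * B) ^ 2 ≤ E * (A * B) := by
      calc (A * B) ^ 2 ≤ (∑ i, ∑ j, Mb i j * (v i * w j)) ^ 2 := h1
        _ ≤ E * (A * B) := by rw [← hMb2, ← hvw2]; exact cs
    nlinarith [mul_pos hA hB]
  calc Real.sqrt A * Real.sqrt B = Real.sqrt (A * B) := (Real.sqrt_mul hA.le B).symm
    _ ≤ Real.sqrt E := Real.sqrt_le_sqrt hABE
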